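/- The separation profile of the infinite Sierpiński graph S satisfies sep^{1/2}_S(n) ≽ n^{log 2 / log 6}: there exists a constant c > 0 such that for infinitely many n, sep^{1/2}_S(n) ≥ c·n^{log 2 / log 6}. -/

import Mathlib

open scoped Classical

/-- Reachability within the subgraph of `X` induced on a vertex set `s`. -/
def SimpleGraph.ReachIn {V : Type*} (X : SimpleGraph V) (s : Set V) (v w : V) : Prop :=
  ∃ (hv : v ∈ s) (hw : w ∈ s), (X.induce s).Reachable ⟨v, hv⟩ ⟨w, hw⟩

/-- The vertex set of the connected component of `v` in the subgraph of `X` induced on `s`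
(empty if `v ∉ s`). -/
def SimpleGraph.compIn {V : Type*} (X : SimpleGraph V) (s : Set V) (v : V) : Set V :=
  {w | X.ReachIn s v w}

/-- `T` is a vertex set witnessing `cut¹ᐟ²` for the subgraph of `X` induced on the finite
vertex set `G`: after removing `T` from `G`, every connected component has at most
`|G|/2` vertices. -/
def IsHalfCutSet {V : Type*} (X : SimpleGraph V) (G T : Finset V) : Prop :=
  T ⊆ G ∧ ∀ v : V, 2 * (X.compIn (↑(G \ T)) v).ncard ≤ G.card

/-- `cut¹ᐟ²` of the subgraph of `X` induced on the finite vertex set `G`: the least size of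
a vertex set whose removal leaves all connected components of size at most `|G|/2`. -/
noncomputable def cutHalf {V : Type*} (X : SimpleGraph V) (G : Finset V) : ℕ :=
  sInf {t | ∃ T : Finset V, IsHalfCutSet X G T ∧ T.card = t}

/-- The `1/2`-separation profile of `X`, over finite subgraphs with vertex set inside `W`. -/
noncomputable def sepHalf {V : Type*} (X : SimpleGraph V) (W : Set V) (n : ℕ) : ℕ :=
  sSup {c | ∃ G : Finset V, ↑G ⊆ W ∧ G.card ≤ n ∧ c = cutHalf X G}

/-- The `i`-th digit of `x` in base `b`. -/
def digit (b i x : ℕ) : ℕ := x / b ^ i % b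

/-- Membership in the vertex set of the infinite Sierpinski graph: no position at which
both coordinates have base-3 digit `1`. -/
def SierpMem (p : ℕ × ℕ) : Prop :=
  ∀ i : ℕ, ¬(digit 3 i p.1 = 1 ∧ digit 3 i p.2 = 1)

/-- The infinite Sierpinski graph `S`, with edges between valid points at `ℓ¹`-distance 1. -/
def SierpGraph : SimpleGraph (ℕ × ℕ) where
  Adj p q := SierpMem p ∧ SierpMem q ∧ |(p.1 : ℤ) - q.1| + |(p.2 : ℤ) - q.2| = 1
  symm := by
    constructor
    rintro p q ⟨hp, hq, h⟩
    exact ⟨hq, hp, by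
      rw [abs_sub_comm (q.1 : ℤ) (p.1 : ℤ), abs_sub_comm (q.2 : ℤ) (p.2 : ℤ)]; exact h⟩
  loopless := by constructor; rintro p ⟨-, -, h⟩; simp at h

/-- The vertex set of the sphere `Γ_k`. -/
noncomputable def GammaV (k : ℕ) : Finset (ℕ × ℕ) :=
  (Finset.range (3 ^ k) ×ˢ Finset.range (3 ^ k)).filter SierpMem

/-- The intersection of the vertical line `V_x` with `Γ_k`. -/
def VlineSet (k x : ℕ) : Set (ℕ × ℕ) := {p | p ∈ GammaV k ∧ p.1 = x}

/-- The intersection of the horizontal line `H_y` with `Γ_k`. -/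
def HlineSet (k y : ℕ) : Set (ℕ × ℕ) := {p | p ∈ GammaV k ∧ p.2 = y}

/-- The vertical line `V_x` is complete in `Γ_k`: its intersection with `Γ_k` is connected. -/
def CompleteV (k x : ℕ) : Prop := (SierpGraph.induce (VlineSet k x)).Connected

/-- The horizontal line `H_y` is complete in `Γ_k`: its intersection with `Γ_k` is connected. -/
def CompleteH (k y : ℕ) : Prop := (SierpGraph.induce (HlineSet k y)).Connected

/-- The vertex set of the complete-lines subgraph `C_k` of `Γ_k`. -/
noncomputable def CkV (k : ℕ) : Finset (ℕ × ℕ) :=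
  (GammaV k).filter fun p => CompleteV k p.1 ∨ CompleteH k p.2

/-! ### Auxiliary material -/

lemma digit_zero' (x : ℕ) : digit 3 0 x = x % 3 := by simp [digit]

lemma digit_succ' (i x : ℕ) : digit 3 (i+1) x = digit 3 i (x / 3) := by
  simp [digit, Nat.div_div_eq_div_mul, pow_succ, mul_comm]

/-- Numbers below `3^k` with no base-3 digit equal to 1. -/
noncomputable def Dk (k : ℕ) : Finset ℕ :=
  (Finset.range (3^k)).filter fun x => ∀ i, digit 3 i x ≠ 1

lemma mem_Dk {k x : ℕ} : x ∈ Dk k ↔ x < 3^k ∧ ∀ i, digit 3 i x ≠ 1 := by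
  simp [Dk]

lemma Dk_card (k : ℕ) : (Dk k).card = 2^k := by
  induction k with
  | zero =>
    have : Dk 0 = {0} := by
      ext x
      simp only [mem_Dk, pow_zero, Nat.lt_one_iff, Finset.mem_singleton]
      constructor
      · rintro ⟨h, -⟩; exact h
      · rintro rfl; exact ⟨rfl, fun i => by simp [digit]⟩
    simp [this]
  | succ k ih =>
    have key : (Dk (k+1)).card = (({0, 2} : Finset ℕ) ×ˢ Dk k).card := by
      apply Finset.card_nbij' (fun x => (x % 3, x / 3)) (fun p => p.1 + 3 * p.2)
      · intro x hx
        rw [Finset.mem_coe, mem_Dk] at hx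
        obtain ⟨hlt, hd⟩ := hx
        simp only [Finset.mem_coe, Finset.mem_product, Finset.mem_insert, Finset.mem_singleton, mem_Dk]
        refine ⟨?_, ?_, fun i => ?_⟩
        · have h0 := hd 0
          rw [digit_zero'] at h0
          omega
        · rw [pow_succ] at hlt; exact Nat.div_lt_of_lt_mul (by omega)
        · have := hd (i+1); rwa [digit_succ'] at this
      · intro p hp
        simp only [Finset.mem_coe, Finset.mem_product, Finset.mem_insert, Finset.mem_singleton, mem_Dk] at hp
        obtain ⟨h1, h2, h3⟩ := hp
        simp only [Finset.mem_coe, mem_Dk]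
        constructor
        · rw [pow_succ]; omega
        · intro i
          cases i with
          | zero => rw [digit_zero']; omega
          | succ i =>
            rw [digit_succ']
            have : (p.1 + 3 * p.2) / 3 = p.2 := by omega
            rw [this]; exact h3 i
      · intro x _; simp; omega
      · intro p hp
        simp only [Finset.mem_coe, Finset.mem_product, Finset.mem_insert, Finset.mem_singleton, mem_Dk] at hp
        obtain ⟨h1, -⟩ := hp
        have hm : (p.1 + 3 * p.2) % 3 = p.1 := by omega
        have h2 : (p.1 + 3 * p.2) / 3 = p.2 := by omega
        simp [hm, h2]
    rw [key, Finset.card_product, ih]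
    simp [pow_succ]
    ring

/-- The union of good vertical and horizontal lines in the `k`-th block. -/
noncomputable def Gk (k : ℕ) : Finset (ℕ × ℕ) :=
  (Dk k) ×ˢ Finset.range (3^k) ∪ (Finset.range (3^k)) ×ˢ (Dk k)

lemma mem_Gk {k : ℕ} {p : ℕ × ℕ} :
    p ∈ Gk k ↔ (p.1 ∈ Dk k ∧ p.2 < 3^k) ∨ (p.1 < 3^k ∧ p.2 ∈ Dk k) := by
  simp [Gk, Finset.mem_union, Finset.mem_product]

lemma sierpMem_left {k x : ℕ} (hx : x ∈ Dk k) (y : ℕ) : SierpMem (x, y) :=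
  fun i hi => (mem_Dk.1 hx).2 i hi.1

lemma sierpMem_right {k y : ℕ} (hy : y ∈ Dk k) (x : ℕ) : SierpMem (x, y) :=
  fun i hi => (mem_Dk.1 hy).2 i hi.2

lemma sierpMem_of_mem_Gk {k : ℕ} {p : ℕ × ℕ} (h : p ∈ Gk k) : SierpMem p := by
  rw [mem_Gk] at h
  rcases h with ⟨h1, -⟩ | ⟨-, h2⟩
  · exact fun i hi => (mem_Dk.1 h1).2 i hi.1
  · exact fun i hi => (mem_Dk.1 h2).2 i hi.2

lemma adj_horiz {x y : ℕ} (h1 : SierpMem (x, y)) (h2 : SierpMem (x+1, y)) :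
    SierpGraph.Adj (x, y) (x+1, y) := by
  refine ⟨h1, h2, ?_⟩
  push_cast
  rw [show ((x:ℤ) - (x+1)) = -1 by ring]
  simp

lemma adj_vert {x y : ℕ} (h1 : SierpMem (x, y)) (h2 : SierpMem (x, y+1)) :
    SierpGraph.Adj (x, y) (x, y+1) := by
  refine ⟨h1, h2, ?_⟩
  push_cast
  rw [show ((y:ℤ) - (y+1)) = -1 by ring]
  simp

section Reach

variable {V : Type*} {X : SimpleGraph V} {s : Set V} {u v w : V}

lemma reachIn_refl (hv : v ∈ s) : X.ReachIn s v v := ⟨hv, hv, .refl _⟩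

lemma reachIn_symm (h : X.ReachIn s v w) : X.ReachIn s w v := by
  obtain ⟨hv, hw, h⟩ := h; exact ⟨hw, hv, h.symm⟩

lemma reachIn_trans (h1 : X.ReachIn s u v) (h2 : X.ReachIn s v w) : X.ReachIn s u w := by
  obtain ⟨hu, hv, h1⟩ := h1
  obtain ⟨hv', hw, h2⟩ := h2
  exact ⟨hu, hw, h1.trans h2⟩

lemma reachIn_adj (hv : v ∈ s) (hw : w ∈ s) (h : X.Adj v w) : X.ReachIn s v w :=
  ⟨hv, hw, SimpleGraph.Adj.reachable (by exact h)⟩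

lemma reachIn_chain (f : ℕ → V) (a b : ℕ) (hab : a ≤ b)
    (hmem : ∀ i, a ≤ i → i ≤ b → f i ∈ s)
    (hadj : ∀ i, a ≤ i → i + 1 ≤ b → X.Adj (f i) (f (i+1))) :
    X.ReachIn s (f a) (f b) := by
  induction b, hab using Nat.le_induction with
  | base => exact reachIn_refl (hmem a le_rfl le_rfl)
  | succ b hab ih =>
    refine reachIn_trans (ih (fun i h1 h2 => hmem i h1 (by omega))
      (fun i h1 h2 => hadj i h1 (by omega))) ?_
    exact reachIn_adj (hmem b hab (by omega)) (hmem (b+1) (by omega) le_rfl)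
      (hadj b hab le_rfl)

lemma reachIn_chain' (f : ℕ → V) (a b L : ℕ) (ha : a < L) (hb : b < L)
    (hmem : ∀ i, i < L → f i ∈ s)
    (hadj : ∀ i, i + 1 < L → X.Adj (f i) (f (i+1))) :
    X.ReachIn s (f a) (f b) := by
  rcases le_total a b with h | h
  · exact reachIn_chain f a b h (fun i _ h2 => hmem i (by omega))
      (fun i _ h2 => hadj i (by omega))
  · exact reachIn_symm (reachIn_chain f b a h (fun i _ h2 => hmem i (by omega))
      (fun i _ h2 => hadj i (by omega)))

end Reach

lemma pow32 {k : ℕ} (hk : 1 ≤ k) : 3 * 2^k ≤ 2 * 3^k := by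
  induction k with
  | zero => omega
  | succ k ih =>
    rcases Nat.eq_zero_or_pos k with rfl | hk1
    · norm_num
    · have h := ih hk1
      have h2 : (2:ℕ)^(k+1) = 2 * 2^k := by ring
      have h3 : (3:ℕ)^(k+1) = 3 * 3^k := by ring
      have h4 : (0:ℕ) ≤ 3^k := Nat.zero_le _
      rw [h2, h3]
      linarith

set_option maxHeartbeats 1000000 in
/-- Main counting lemma: any half-cut set of `Gk k` has at least `2^k / 6` vertices. -/
lemma cut_lb {k : ℕ} (hk : 1 ≤ k) {T : Finset (ℕ × ℕ)}
    (hT : IsHalfCutSet SierpGraph (Gk k) T) : 2 ^ k ≤ 6 * T.card := by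
  set L := 3 ^ k with hLdef
  set M := 2 ^ k with hMdef
  set UH := (Dk k).filter (fun y => ∀ x, x < L → (x, y) ∉ T) with hUHdef
  set UV := (Dk k).filter (fun x => ∀ y, y < L → (x, y) ∉ T) with hUVdef
  have hDkcard : (Dk k).card = M := Dk_card k
  have hML : M ≤ L := Nat.pow_le_pow_left (by norm_num) k
  have h3M : 3 * M ≤ 2 * L := pow32 hk
  have hUHsub : UH ⊆ Dk k := Finset.filter_subset _ _
  have hUVsub : UV ⊆ Dk k := Finset.filter_subset _ _
  have hDkL : ∀ y ∈ Dk k, y < L := fun y hy => (mem_Dk.1 hy).1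
  -- untouched-lines counting
  have hcardH : M ≤ UH.card + T.card := by
    have hsub : Dk k \ UH ⊆ T.image Prod.snd := by
      intro y hy
      rw [Finset.mem_sdiff, hUHdef, Finset.mem_filter] at hy
      push_neg at hy
      obtain ⟨hy1, hy2⟩ := hy
      obtain ⟨x, -, hxT⟩ := hy2 hy1
      exact Finset.mem_image.2 ⟨(x, y), hxT, rfl⟩
    have h1 : (Dk k \ UH).card ≤ T.card :=
      le_trans (Finset.card_le_card hsub) Finset.card_image_le
    have h2 : (Dk k \ UH).card = (Dk k).card - UH.card := Finset.card_sdiff_of_subset hUHsub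
    have h3 : UH.card ≤ (Dk k).card := Finset.card_le_card hUHsub
    omega
  have hcardV : M ≤ UV.card + T.card := by
    have hsub : Dk k \ UV ⊆ T.image Prod.fst := by
      intro x hx
      rw [Finset.mem_sdiff, hUVdef, Finset.mem_filter] at hx
      push_neg at hx
      obtain ⟨hx1, hx2⟩ := hx
      obtain ⟨y, -, hyT⟩ := hx2 hx1
      exact Finset.mem_image.2 ⟨(x, y), hyT, rfl⟩
    have h1 : (Dk k \ UV).card ≤ T.card :=
      le_trans (Finset.card_le_card hsub) Finset.card_image_le
    have h2 : (Dk k \ UV).card = (Dk k).card - UV.card := Finset.card_sdiff_of_subset hUVsub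
    have h3 : UV.card ≤ (Dk k).card := Finset.card_le_card hUVsub
    omega
  rcases Finset.eq_empty_or_nonempty UH with hUHe | hUHne
  · rw [hUHe] at hcardH; simp at hcardH; omega
  rcases Finset.eq_empty_or_nonempty UV with hUVe | hUVne
  · rw [hUVe] at hcardV; simp at hcardV; omega
  obtain ⟨y0, hy0⟩ := hUHne
  obtain ⟨x0, hx0⟩ := hUVne
  have hy0D : y0 ∈ Dk k := hUHsub hy0
  have hx0D : x0 ∈ Dk k := hUVsub hx0
  have hy0L : y0 < L := hDkL _ hy0D
  have hx0L : x0 < L := hDkL _ hx0D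
  set s : Set (ℕ × ℕ) := ↑(Gk k \ T) with hsdef
  have hmemH : ∀ y ∈ UH, ∀ x, x < L → (x, y) ∈ s := by
    intro y hy x hx
    rw [hsdef, Finset.mem_coe, Finset.mem_sdiff]
    refine ⟨mem_Gk.2 (Or.inr ⟨hx, hUHsub hy⟩), ?_⟩
    rw [hUHdef, Finset.mem_filter] at hy
    exact hy.2 x hx
  have hmemV : ∀ x ∈ UV, ∀ y, y < L → (x, y) ∈ s := by
    intro x hx y hy
    rw [hsdef, Finset.mem_coe, Finset.mem_sdiff]
    refine ⟨mem_Gk.2 (Or.inl ⟨hUVsub hx, hy⟩), ?_⟩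
    rw [hUVdef, Finset.mem_filter] at hx
    exact hx.2 y hy
  have reachH : ∀ y ∈ UH, ∀ x, x < L → SierpGraph.ReachIn s (x0, y0) (x, y) := by
    intro y hy x hx
    have hyD := hUHsub hy
    have hyL := hDkL _ hyD
    have step1 : SierpGraph.ReachIn s (x0, y0) (x0, y) :=
      reachIn_chain' (fun t => (x0, t)) y0 y L hy0L hyL
        (fun i hi => hmemV x0 hx0 i hi)
        (fun i hi => adj_vert (sierpMem_left hx0D i) (sierpMem_left hx0D (i+1)))
    have step2 : SierpGraph.ReachIn s (x0, y) (x, y) :=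
      reachIn_chain' (fun u => (u, y)) x0 x L hx0L hx
        (fun i hi => hmemH y hy i hi)
        (fun i hi => adj_horiz (sierpMem_right hyD i) (sierpMem_right hyD (i+1)))
    exact reachIn_trans step1 step2
  have reachV : ∀ x ∈ UV, ∀ y, y < L → SierpGraph.ReachIn s (x0, y0) (x, y) := by
    intro x hx y hy
    have hxD := hUVsub hx
    have hxL := hDkL _ hxD
    have step1 : SierpGraph.ReachIn s (x0, y0) (x, y0) :=
      reachIn_chain' (fun u => (u, y0)) x0 x L hx0L hxL
        (fun i hi => hmemH y0 hy0 i hi)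
        (fun i hi => adj_horiz (sierpMem_right hy0D i) (sierpMem_right hy0D (i+1)))
    have step2 : SierpGraph.ReachIn s (x, y0) (x, y) :=
      reachIn_chain' (fun t => (x, t)) y0 y L hy0L hy
        (fun i hi => hmemV x hx i hi)
        (fun i hi => adj_vert (sierpMem_left hxD i) (sierpMem_left hxD (i+1)))
    exact reachIn_trans step1 step2
  set C := SierpGraph.compIn s (x0, y0) with hCdef
  set HH := (Finset.range L) ×ˢ UH with hHHdef
  set VV := UV ×ˢ ((Finset.range L) \ UH) with hVVdef
  have hsubC : ↑(HH ∪ VV) ⊆ C := by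
    rintro ⟨x, y⟩ hp
    rw [Finset.mem_coe, Finset.mem_union] at hp
    rcases hp with hp | hp
    · rw [hHHdef, Finset.mem_product, Finset.mem_range] at hp
      exact reachH y hp.2 x hp.1
    · rw [hVVdef, Finset.mem_product, Finset.mem_sdiff, Finset.mem_range] at hp
      exact reachV x hp.1 y hp.2.1
  have hCsub : C ⊆ s := fun w hw => hw.2.1
  have hCfin : C.Finite := Set.Finite.subset (Gk k \ T).finite_toSet hCsub
  have hcount : (HH ∪ VV).card ≤ C.ncard := by
    rw [← Set.ncard_coe_finset]
    exact Set.ncard_le_ncard hsubC hCfin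
  have hdisj : Disjoint HH VV := by
    rw [Finset.disjoint_left]
    rintro ⟨x, y⟩ h1 h2
    rw [hHHdef, Finset.mem_product] at h1
    rw [hVVdef, Finset.mem_product, Finset.mem_sdiff] at h2
    exact h2.2.2 h1.2
  have hUHrange : UH ⊆ Finset.range L := fun y hy => Finset.mem_range.2 (hDkL _ (hUHsub hy))
  have hcards : (HH ∪ VV).card = L * UH.card + UV.card * (L - UH.card) := by
    rw [Finset.card_union_of_disjoint hdisj, hHHdef, hVVdef, Finset.card_product,
      Finset.card_product, Finset.card_sdiff_of_subset hUHrange, Finset.card_range]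
  have hhalf : 2 * C.ncard ≤ (Gk k).card := by
    have h := hT.2 (x0, y0)
    rw [hCdef, hsdef]
    convert h using 10
  have hGcard : (Gk k).card ≤ 2 * (M * L) := by
    calc (Gk k).card ≤ ((Dk k) ×ˢ Finset.range (3^k)).card
        + ((Finset.range (3^k)) ×ˢ (Dk k)).card := Finset.card_union_le _ _
    _ = M * L + L * M := by
        rw [Finset.card_product, Finset.card_product, Finset.card_range, hDkcard]
    _ = 2 * (M * L) := by ring
  have key : 2 * (L * UH.card + UV.card * (L - UH.card)) ≤ 2 * (M * L) := by
    calc 2 * (L * UH.card + UV.card * (L - UH.card)) = 2 * (HH ∪ VV).card := by rw [hcards]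
    _ ≤ 2 * C.ncard := by omega
    _ ≤ (Gk k).card := hhalf
    _ ≤ 2 * (M * L) := hGcard
  -- final arithmetic
  rcases le_or_gt M T.card with h | h
  · omega
  have haM : UH.card ≤ M := hDkcard ▸ Finset.card_le_card hUHsub
  have haL : UH.card ≤ L := le_trans haM hML
  have hfin : (M : ℤ) ≤ 6 * T.card := by
    have h1 : (M : ℤ) - T.card ≤ UH.card := by omega
    have h2 : (M : ℤ) - T.card ≤ UV.card := by omega
    have h3 : (UH.card : ℤ) ≤ M := by exact_mod_cast haM
    have h4 : (M : ℤ) ≤ L := by exact_mod_cast hML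
    have h5 : 3 * (M : ℤ) ≤ 2 * L := by exact_mod_cast h3M
    have htM : (T.card : ℤ) < M := by exact_mod_cast h
    have ht0 : (0 : ℤ) ≤ T.card := Int.natCast_nonneg _
    have hL0 : (0 : ℤ) < L := by positivity
    have hM0 : (0 : ℤ) < M := by positivity
    have h6 : (L : ℤ) * UH.card + UV.card * (L - UH.card) ≤ M * L := by
      have := key
      zify [haL] at this
      linarith
    have e1 : ((M : ℤ) - T.card) * L ≤ L * UH.card := by nlinarith
    have e2 : ((M : ℤ) - T.card) * (L - M) ≤ UV.card * (L - UH.card) := by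
      apply mul_le_mul h2 (by linarith) (by linarith) (by linarith)
    have e3 : ((M : ℤ) - T.card) * L + (M - T.card) * (L - M) ≤ M * L := by linarith
    have e4 : 3 * (M : ℤ) * M ≤ 2 * L * M := by nlinarith
    have e5 : (M : ℤ) * L ≤ 6 * T.card * L := by nlinarith
    have := (mul_le_mul_iff_of_pos_right hL0).1 e5
    linarith
  exact_mod_cast hfin

lemma halfcut_self {V : Type*} (X : SimpleGraph V) (G : Finset V) : IsHalfCutSet X G G := by
  refine ⟨subset_rfl, fun v => ?_⟩
  have h0 : X.compIn (∅ : Set V) v = ∅ := by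
    ext w
    simp only [SimpleGraph.compIn, SimpleGraph.ReachIn, Set.mem_setOf_eq,
      Set.mem_empty_iff_false, iff_false]
    rintro ⟨hv, -, -⟩
    simp at hv
  have h1 : (↑(G \ G) : Set V) = (∅ : Set V) := by simp
  rw [h1, h0]
  simp

lemma cutHalf_le_card {V : Type*} (X : SimpleGraph V) (G : Finset V) :
    cutHalf X G ≤ G.card :=
  Nat.sInf_le ⟨G, halfcut_self X G, rfl⟩

lemma cutHalf_lb {k : ℕ} (hk : 1 ≤ k) : 2 ^ k ≤ 6 * cutHalf SierpGraph (Gk k) := by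
  have hne : {t | ∃ T : Finset (ℕ × ℕ), IsHalfCutSet SierpGraph (Gk k) T ∧ T.card = t}.Nonempty :=
    ⟨(Gk k).card, Gk k, halfcut_self _ _, rfl⟩
  obtain ⟨T, hT, hcard⟩ := Nat.sInf_mem hne
  rw [cutHalf, hcard.symm] at *
  exact cut_lb hk hT

lemma cutHalf_le_sepHalf {V : Type*} (X : SimpleGraph V) (W : Set V) (n : ℕ)
    (G : Finset V) (h1 : ↑G ⊆ W) (h2 : G.card ≤ n) :
    cutHalf X G ≤ sepHalf X W n := by
  apply le_csSup
  · refine ⟨n, ?_⟩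
    rintro c ⟨G', -, hc, rfl⟩
    exact le_trans (cutHalf_le_card X G') hc
  · exact ⟨G, h1, h2, rfl⟩

lemma Gk_card_le (k : ℕ) : (Gk k).card ≤ 2 * 6 ^ k := by
  have h6 : (6:ℕ)^k = 2^k * 3^k := by rw [← mul_pow]; norm_num
  calc (Gk k).card ≤ ((Dk k) ×ˢ Finset.range (3^k)).card
      + ((Finset.range (3^k)) ×ˢ (Dk k)).card := Finset.card_union_le _ _
  _ = 2^k * 3^k + 3^k * 2^k := by
      rw [Finset.card_product, Finset.card_product, Finset.card_range, Dk_card]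
  _ ≤ 2 * 6^k := by rw [h6]; ring_nf; omega

lemma Gk_subset_sierp (k : ℕ) : ↑(Gk k) ⊆ {p : ℕ × ℕ | SierpMem p} := by
  intro p hp
  exact sierpMem_of_mem_Gk (Finset.mem_coe.1 hp)

/-- Lower bound on the separation profile of the infinite Sierpinski graph:
`sep¹ᐟ²_S(n) ≽ n^(log 2 / log 6)`. -/
theorem sierpinski_sep_lower :
    ∃ c : ℝ, 0 < c ∧ ∀ N : ℕ, ∃ n : ℕ, N ≤ n ∧
      c * (n : ℝ) ^ (Real.log 2 / Real.log 6) ≤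
        (sepHalf SierpGraph {p : ℕ × ℕ | SierpMem p} n : ℝ) := by
  refine ⟨1/12, by norm_num, fun N => ?_⟩
  set α := Real.log 2 / Real.log 6 with hα
  obtain ⟨k, hk1, hkN⟩ : ∃ k : ℕ, 1 ≤ k ∧ N ≤ 2 * 6 ^ k := by
    refine ⟨N + 1, by omega, ?_⟩
    have h1 : N < 2 ^ N := Nat.lt_two_pow_self
    have h2 : 2 ^ N ≤ 6 ^ N := Nat.pow_le_pow_left (by norm_num) N
    have h3 : 6 ^ N ≤ 6 ^ (N + 1) :=
      Nat.pow_le_pow_right (by norm_num) (by omega)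
    omega
  refine ⟨2 * 6 ^ k, hkN, ?_⟩
  -- sepHalf ≥ cutHalf (Gk k) ≥ 2^k / 6
  have hsep : 2 ^ k ≤ 6 * sepHalf SierpGraph {p : ℕ × ℕ | SierpMem p} (2 * 6 ^ k) := by
    have h1 := cutHalf_lb hk1
    have h2 := cutHalf_le_sepHalf SierpGraph {p : ℕ × ℕ | SierpMem p} (2 * 6 ^ k)
      (Gk k) (Gk_subset_sierp k) (Gk_card_le k)
    omega
  have hsepR : (2 : ℝ) ^ k / 6 ≤ (sepHalf SierpGraph {p : ℕ × ℕ | SierpMem p} (2 * 6 ^ k) : ℝ) := by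
    have : ((2 ^ k : ℕ) : ℝ) ≤ ((6 * sepHalf SierpGraph {p : ℕ × ℕ | SierpMem p} (2 * 6 ^ k) : ℕ) : ℝ) := by
      exact_mod_cast hsep
    push_cast at this
    linarith
  -- now bound (2*6^k)^α ≤ 2 * 2^k
  have h6pos : (0:ℝ) < 6 := by norm_num
  have hlog6 : Real.log 6 ≠ 0 := by
    have : (1:ℝ) < 6 := by norm_num
    exact ne_of_gt (Real.log_pos this)
  have hαval : ((6:ℝ) ^ k) ^ α = 2 ^ k := by
    rw [← Real.rpow_natCast (6:ℝ) k, ← Real.rpow_natCast (2:ℝ) k, ← Real.rpow_mul (le_of_lt h6pos)]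
    rw [Real.rpow_def_of_pos h6pos, Real.rpow_def_of_pos (by norm_num : (0:ℝ) < 2)]
    congr 1
    rw [hα]
    field_simp
  have hα1 : α ≤ 1 := by
    rw [hα]
    rw [div_le_one (Real.log_pos (by norm_num))]
    exact Real.log_le_log (by norm_num) (by norm_num)
  have hα0 : 0 ≤ α := by
    rw [hα]
    positivity
  have h2α : (2:ℝ) ^ α ≤ 2 := by
    calc (2:ℝ) ^ α ≤ (2:ℝ) ^ (1:ℝ) :=
      Real.rpow_le_rpow_of_exponent_le (by norm_num) hα1
    _ = 2 := Real.rpow_one 2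
  have hbound : ((2 * 6 ^ k : ℕ) : ℝ) ^ α ≤ 2 * 2 ^ k := by
    have hcast : ((2 * 6 ^ k : ℕ) : ℝ) = 2 * (6:ℝ) ^ k := by push_cast; ring
    rw [hcast, Real.mul_rpow (by norm_num) (by positivity), hαval]
    have h2k : (0:ℝ) ≤ (2:ℝ) ^ k := by positivity
    nlinarith
  have hfinal : (1/12 : ℝ) * ((2 * 6 ^ k : ℕ) : ℝ) ^ α ≤ 2 ^ k / 6 := by
    have h12 : (0:ℝ) ≤ 1/12 := by norm_num
    have := mul_le_mul_of_nonneg_left hbound h12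
    linarith
  linarith [hsepR, hfinal]
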